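/- arXiv:2410.22930 — 3 statements merged into one kernel-verified Lean document; each statement's English description precedes it below -/
import Mathlib

section
/- Let C be a finite subset of the unit sphere S^{n+2} in R^{n+3} spanning (together with 0) the subspace R^n × {0}³, and let x be a point of S^{n+2} not in that span. Then the set of points a on S^{n+2} with |a - c| = |x - c| for all c in C is exactly the intersection of the unit sphere with the affine 3-plane {(x_1,...,x_n)} × R³ (where (x_1,...,x_n) is the projection of x onto the span of C), and this set is a 2-sphere of radius ρ with ρ² = 1 - (x_1² + ... + x_n²) > 0. -/
open Finset

private lemma sumsq (n : ℕ) (y : EuclideanSpace ℝ (Fin (n+3))) (hy : ‖y‖ = 1) :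
    ∑ i : Fin (n+3), (y i)^2 = 1 := by
  have h := EuclideanSpace.norm_eq y
  rw [hy] at h
  have h2 : (1:ℝ)^2 = (Real.sqrt (∑ i, ‖y i‖^2))^2 := by rw [← h]
  rw [Real.sq_sqrt (by positivity)] at h2
  simpa [Real.norm_eq_abs, sq_abs] using h2.symm

private lemma splitsum (n : ℕ) (y : EuclideanSpace ℝ (Fin (n+3))) (hy : ‖y‖ = 1) :
    (∑ i : Fin (n+3), (if (i : ℕ) < n then (y i)^2 else 0))
      + (∑ i : Fin (n+3), (if n ≤ (i : ℕ) then (y i)^2 else 0)) = 1 := by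
  rw [← Finset.sum_add_distrib]
  rw [← sumsq n y hy]
  apply Finset.sum_congr rfl
  intro i _
  by_cases h : (i : ℕ) < n
  · simp [h, not_le.mpr h]
  · simp [h, not_lt.mp h]

theorem stmt0 (n : ℕ) (C : Finset (EuclideanSpace ℝ (Fin (n+3))))
    (hC : ∀ c ∈ C, ‖c‖ = 1)
    (hspan : (Submodule.span ℝ (C : Set (EuclideanSpace ℝ (Fin (n+3)))) :
        Set (EuclideanSpace ℝ (Fin (n+3)))) =
      {v | ∀ i : Fin (n+3), n ≤ (i : ℕ) → v i = 0})
    (x : EuclideanSpace ℝ (Fin (n+3))) (hx : ‖x‖ = 1)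
    (hxC : x ∉ Submodule.span ℝ (C : Set (EuclideanSpace ℝ (Fin (n+3))))) :
    {a : EuclideanSpace ℝ (Fin (n+3)) | ‖a‖ = 1 ∧ ∀ c ∈ C, dist a c = dist x c} =
      {a : EuclideanSpace ℝ (Fin (n+3)) | ‖a‖ = 1 ∧ ∀ i : Fin (n+3), (i : ℕ) < n → a i = x i} ∧
    0 < 1 - ∑ i : Fin (n+3), (if (i : ℕ) < n then (x i)^2 else 0) ∧
    ∀ a : EuclideanSpace ℝ (Fin (n+3)), ‖a‖ = 1 → (∀ c ∈ C, dist a c = dist x c) →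
      ∑ i : Fin (n+3), (if n ≤ (i : ℕ) then (a i)^2 else 0) =
        1 - ∑ i : Fin (n+3), (if (i : ℕ) < n then (x i)^2 else 0) := by
  classical
  -- distance condition iff inner product condition
  have hdist : ∀ a : EuclideanSpace ℝ (Fin (n+3)), ‖a‖ = 1 → ∀ c ∈ C,
      (dist a c = dist x c ↔ (inner ℝ c (a - x) : ℝ) = 0) := by
    intro a ha c hc
    have hc1 := hC c hc
    have hsq : ∀ y : EuclideanSpace ℝ (Fin (n+3)), ‖y‖ = 1 →
        dist y c ^ 2 = 2 - 2 * (inner ℝ y c : ℝ) := by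
      intro y hy
      rw [dist_eq_norm, @norm_sub_sq_real, hy, hc1]
      ring
    constructor
    · intro h
      have h2 : dist a c ^ 2 = dist x c ^ 2 := by rw [h]
      rw [hsq a ha, hsq x hx] at h2
      have : (inner ℝ a c : ℝ) = inner ℝ x c := by linarith
      rw [inner_sub_right, ← real_inner_comm c a, ← real_inner_comm c x, this]
      ring
    · intro h
      have h0 : (inner ℝ a c : ℝ) = inner ℝ x c := by
        rw [inner_sub_right] at h
        have hca : (inner ℝ a c : ℝ) = inner ℝ c a := real_inner_comm c a
        have hcx : (inner ℝ x c : ℝ) = inner ℝ c x := real_inner_comm c x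
        linarith
      have h2 : dist a c ^ 2 = dist x c ^ 2 := by rw [hsq a ha, hsq x hx, h0]
      have hprod : (dist a c - dist x c) * (dist a c + dist x c) = 0 := by
        linear_combination h2
      rcases mul_eq_zero.mp hprod with h3 | h3
      · linarith
      · have d1 := dist_nonneg (x := a) (y := c)
        have d2 := dist_nonneg (x := x) (y := c)
        linarith
  -- the inner condition is equivalent to agreeing on coords < n
  have hiff : ∀ a : EuclideanSpace ℝ (Fin (n+3)),
      ((∀ c ∈ C, (inner ℝ c (a - x) : ℝ) = 0) ↔ ∀ i : Fin (n+3), (i : ℕ) < n → a i = x i) := by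
    intro a
    constructor
    · intro h i hi
      have hspan_inner : ∀ v ∈ Submodule.span ℝ (C : Set (EuclideanSpace ℝ (Fin (n+3)))),
          (inner ℝ v (a - x) : ℝ) = 0 := by
        intro v hv
        induction hv using Submodule.span_induction with
        | mem c hc => exact h c hc
        | zero => simp
        | add u w _ _ hu hw => rw [inner_add_left, hu, hw]; ring
        | smul r v _ hv => rw [real_inner_smul_left, hv]; ring
      have hei : (EuclideanSpace.single i (1:ℝ)) ∈
          Submodule.span ℝ (C : Set (EuclideanSpace ℝ (Fin (n+3)))) := by
        have : (EuclideanSpace.single i (1:ℝ)) ∈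
            (Submodule.span ℝ (C : Set (EuclideanSpace ℝ (Fin (n+3)))) :
              Set (EuclideanSpace ℝ (Fin (n+3)))) := by
          rw [hspan]
          intro j hj
          have : j ≠ i := by
            intro hji; rw [hji] at hj; omega
          simp [EuclideanSpace.single_apply, this]
        exact this
      have := hspan_inner _ hei
      rw [EuclideanSpace.inner_single_left] at this
      simp only [map_one, one_mul] at this
      have hax : (a - x) i = 0 := this
      have : a i - x i = 0 := by simpa using hax
      linarith
    · intro h c hc
      have hcs : c ∈ (Submodule.span ℝ (C : Set (EuclideanSpace ℝ (Fin (n+3)))) :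
          Set (EuclideanSpace ℝ (Fin (n+3)))) := Submodule.subset_span hc
      rw [hspan] at hcs
      rw [PiLp.inner_apply]
      apply Finset.sum_eq_zero
      intro i _
      by_cases hi : (i : ℕ) < n
      · have : a i - x i = 0 := by rw [h i hi]; ring
        have hax : (a - x) i = a i - x i := by simp
        simp [hax, this]
      · simp [hcs i (not_lt.mp hi)]
  -- positivity
  have hpos : 0 < 1 - ∑ i : Fin (n+3), (if (i : ℕ) < n then (x i)^2 else 0) := by
    have hx0 : ∃ i : Fin (n+3), n ≤ (i : ℕ) ∧ x i ≠ 0 := by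
      by_contra hcon
      push_neg at hcon
      apply hxC
      have : x ∈ (Submodule.span ℝ (C : Set (EuclideanSpace ℝ (Fin (n+3)))) :
          Set (EuclideanSpace ℝ (Fin (n+3)))) := by
        rw [hspan]; intro i hi; exact hcon i hi
      exact this
    obtain ⟨i0, hi0, hx0⟩ := hx0
    have hsplit := splitsum n x hx
    have hbig : (x i0)^2 ≤ ∑ i : Fin (n+3), (if n ≤ (i : ℕ) then (x i)^2 else 0) := by
      have := Finset.single_le_sum (f := fun i : Fin (n+3) => if n ≤ (i : ℕ) then (x i)^2 else 0)
        (fun i _ => by positivity) (Finset.mem_univ i0)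
      simpa [hi0] using this
    nlinarith [pow_two_pos_of_ne_zero hx0]
  refine ⟨?_, hpos, ?_⟩
  · ext a
    simp only [Set.mem_setOf_eq]
    constructor
    · rintro ⟨ha, hd⟩
      exact ⟨ha, (hiff a).mp (fun c hc => (hdist a ha c hc).mp (hd c hc))⟩
    · rintro ⟨ha, hcoord⟩
      exact ⟨ha, fun c hc => (hdist a ha c hc).mpr ((hiff a).mpr hcoord c hc)⟩
  · intro a ha hd
    have hcoord := (hiff a).mp (fun c hc => (hdist a ha c hc).mp (hd c hc))
    have h1 := splitsum n a ha
    have h2 : (∑ i : Fin (n+3), (if (i : ℕ) < n then (a i)^2 else 0))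
        = ∑ i : Fin (n+3), (if (i : ℕ) < n then (x i)^2 else 0) := by
      apply Finset.sum_congr rfl
      intro i _
      by_cases hi : (i : ℕ) < n
      · simp [hi, hcoord i hi]
      · simp [hi]
    linarith
end

section
/- Let S² be a 2-sphere of radius ρ in R³ and let a, b ∈ S² be non-antipodal points whose angular distance (angle at the center) is less than φ for some 0 < φ < π. Then there exists a point z ∈ S² such that the angles between z and a, and between z and b, are both strictly less than φ/2, and z does not lie on the great circle through a and b. -/
set_option maxHeartbeats 800000 in

theorem stmt3 (ρ φ : ℝ) (hρ : 0 < ρ) (hφ : 0 < φ) (hφπ : φ < Real.pi)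
    (a b : EuclideanSpace ℝ (Fin 3)) (ha : ‖a‖ = ρ) (hb : ‖b‖ = ρ)
    (hant : b ≠ -a) (hang : Real.arccos ((inner ℝ a b : ℝ) / ρ ^ 2) < φ) :
    ∃ z : EuclideanSpace ℝ (Fin 3), ‖z‖ = ρ ∧
      Real.arccos ((inner ℝ z a : ℝ) / ρ ^ 2) < φ / 2 ∧
      Real.arccos ((inner ℝ z b : ℝ) / ρ ^ 2) < φ / 2 ∧
      z ∉ Submodule.span ℝ ({a, b} : Set (EuclideanSpace ℝ (Fin 3))) := by
  set c : ℝ := inner ℝ a b with hc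
  have harccos_anti : Antitone Real.arccos := by
    intro x y hxy
    simp only [Real.arccos]
    have := Real.monotone_arcsin hxy
    linarith
  have hρ2 : (0:ℝ) < ρ ^ 2 := by positivity
  have hcρ : Real.cos φ < c / ρ ^ 2 := by
    by_contra h
    push_neg at h
    have h1 : φ ≤ Real.arccos (c / ρ ^ 2) := by
      calc φ = Real.arccos (Real.cos φ) := (Real.arccos_cos hφ.le hφπ.le).symm
        _ ≤ Real.arccos (c / ρ ^ 2) := harccos_anti h
    linarith
  have hcρ' : Real.cos φ * ρ ^ 2 < c := by
    rwa [lt_div_iff₀ hρ2] at hcρ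
  have hcosφ : Real.cos φ > -1 := by
    have := Real.cos_lt_cos_of_nonneg_of_le_pi hφ.le le_rfl hφπ
    simpa [Real.cos_pi] using this
  have hcabs : c ≤ ρ ^ 2 := by
    have h := real_inner_le_norm a b
    rw [ha, hb] at h
    calc c ≤ ρ * ρ := h
      _ = ρ ^ 2 := (sq ρ).symm
  have hcneg : -ρ ^ 2 < c := by
    have h2 : 0 < ρ ^ 2 * (Real.cos φ + 1) := mul_pos hρ2 (by linarith)
    nlinarith [hcρ']
  have hab0 : a + b ≠ 0 := fun h => hant ((neg_eq_of_add_eq_zero_right h).symm)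
  set s : ℝ := ‖a + b‖ with hs
  have hs0 : 0 < s := norm_pos_iff.mpr hab0
  have hssq : s ^ 2 = 2 * ρ ^ 2 + 2 * c := by
    have h := norm_add_sq_real a b
    rw [ha, hb] at h
    rw [← hs] at h
    linarith
  set k : ℝ := (ρ ^ 2 + c) / (ρ * s) with hk
  have hρc : 0 < ρ ^ 2 + c := by linarith
  have hk0 : 0 < k := by positivity
  have hksq : k ^ 2 = (ρ ^ 2 + c) / (2 * ρ ^ 2) := by
    rw [hk, div_pow, mul_pow, hssq]
    rw [div_eq_div_iff (ne_of_gt (by nlinarith)) (ne_of_gt (by positivity))]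
    ring
  have hcoshalf : 0 < Real.cos (φ / 2) := by
    apply Real.cos_pos_of_mem_Ioo
    constructor <;> [linarith [Real.pi_pos]; linarith]
  have hcossq : Real.cos (φ / 2) ^ 2 = 1 / 2 + Real.cos φ / 2 := by
    have := Real.cos_sq (φ / 2)
    rwa [show 2 * (φ / 2) = φ by ring] at this
  have hk_gt : Real.cos (φ / 2) < k := by
    have h1 : Real.cos (φ / 2) ^ 2 < k ^ 2 := by
      rw [hcossq, hksq]
      rw [lt_div_iff₀ (by positivity)]
      linarith [hcρ']
    exact lt_of_pow_lt_pow_left₀ 2 hk0.le h1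
  have hk_le : k ≤ 1 := by
    have h1 : k ^ 2 ≤ 1 ^ 2 := by
      rw [hksq, one_pow, div_le_one (by positivity)]
      linarith
    exact le_of_pow_le_pow_left₀ two_ne_zero zero_le_one h1
  set t : ℝ := (Real.cos (φ / 2) / k + 1) / 2 with ht
  have ht0 : 0 < t := by positivity
  have htk1 : Real.cos (φ / 2) / k < 1 := by
    rw [div_lt_one hk0]; exact hk_gt
  have ht1 : t < 1 := by rw [ht]; linarith
  have htk : Real.cos (φ / 2) < t * k := by
    have h1 : Real.cos (φ / 2) / k < t := by rw [ht]; linarith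
    calc Real.cos (φ / 2) = Real.cos (φ / 2) / k * k := by field_simp
      _ < t * k := mul_lt_mul_of_pos_right h1 hk0
  have htk_le : t * k < 1 := by
    calc t * k ≤ t * 1 := mul_le_mul_of_nonneg_left hk_le ht0.le
      _ = t := mul_one t
      _ < 1 := ht1
  have htk_pos : 0 < t * k := mul_pos ht0 hk0
  set u : ℝ := Real.sqrt (1 - t ^ 2) with hu
  have ht2 : t ^ 2 < 1 := by nlinarith
  have hu0 : 0 < u := Real.sqrt_pos.mpr (by linarith)
  have husq : u ^ 2 = 1 - t ^ 2 := Real.sq_sqrt (by linarith)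
  -- orthogonal direction
  set K : Submodule ℝ (EuclideanSpace ℝ (Fin 3)) := Submodule.span ℝ ({a, b} : Set _) with hK
  have hKne : K ≠ ⊤ := by
    classical
    intro h
    have h1 : Module.finrank ℝ K ≤ 2 := by
      have h2 : Module.finrank ℝ K ≤ ({a, b} : Set (EuclideanSpace ℝ (Fin 3))).toFinset.card :=
        finrank_span_le_card _
      refine h2.trans ?_
      rw [Set.toFinset_insert, Set.toFinset_singleton]
      exact (Finset.card_insert_le _ _).trans (by simp)
    rw [h, finrank_top] at h1
    simp [finrank_euclideanSpace] at h1
  have hKorth : Kᗮ ≠ ⊥ := fun h => hKne (Submodule.orthogonal_eq_bot_iff.mp h)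
  obtain ⟨n, hnK, hn0⟩ := Submodule.exists_mem_ne_zero_of_ne_bot hKorth
  have hnn : (0:ℝ) < ‖n‖ := norm_pos_iff.mpr hn0
  have haK : a ∈ K := Submodule.subset_span (by simp)
  have hbK : b ∈ K := Submodule.subset_span (by simp)
  have hna : (inner ℝ n a : ℝ) = 0 := Submodule.inner_left_of_mem_orthogonal haK hnK
  have hnb : (inner ℝ n b : ℝ) = 0 := Submodule.inner_left_of_mem_orthogonal hbK hnK
  set z : EuclideanSpace ℝ (Fin 3) := (ρ * t / s) • (a + b) + (ρ * u / ‖n‖) • n with hz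
  have hna' : (inner ℝ a n : ℝ) = 0 := Submodule.inner_right_of_mem_orthogonal haK hnK
  have hnb' : (inner ℝ b n : ℝ) = 0 := Submodule.inner_right_of_mem_orthogonal hbK hnK
  have hinner_ab_n : (inner ℝ (a + b) n : ℝ) = 0 := by
    rw [inner_add_left, hna', hnb']
    ring
  have hinner_n_ab : (inner ℝ n (a + b) : ℝ) = 0 := by
    rw [inner_add_right, hna, hnb]
    ring
  have hc2 : (inner ℝ b a : ℝ) = c := by rw [real_inner_comm]
  have hinner_za : (inner ℝ z a : ℝ) = (ρ * t / s) * (ρ ^ 2 + c) := by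
    rw [hz, inner_add_left, real_inner_smul_left, real_inner_smul_left, inner_add_left,
      hna, real_inner_self_eq_norm_sq, ha, hc2]
    ring
  have hinner_zb : (inner ℝ z b : ℝ) = (ρ * t / s) * (ρ ^ 2 + c) := by
    rw [hz, inner_add_left, real_inner_smul_left, real_inner_smul_left, inner_add_left,
      hnb, real_inner_self_eq_norm_sq, hb, ← hc]
    ring
  have hval : (ρ * t / s) * (ρ ^ 2 + c) / ρ ^ 2 = t * k := by
    rw [hk]; field_simp
  have hznorm : ‖z‖ = ρ := by
    have h1 : ‖z‖ ^ 2 = ρ ^ 2 := by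
      rw [hz, norm_add_sq_real, real_inner_smul_left, real_inner_smul_right, hinner_ab_n,
        norm_smul, norm_smul, Real.norm_eq_abs, Real.norm_eq_abs,
        abs_of_pos (by positivity), abs_of_pos (by positivity), ← hs,
        div_mul_cancel₀ _ hs0.ne', div_mul_cancel₀ _ hnn.ne']
      rw [mul_zero, mul_zero, mul_zero, add_zero]
      linear_combination (ρ ^ 2) * husq
    calc ‖z‖ = Real.sqrt (‖z‖ ^ 2) := (Real.sqrt_sq (norm_nonneg z)).symm
      _ = Real.sqrt (ρ ^ 2) := by rw [h1]
      _ = ρ := Real.sqrt_sq hρ.le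
  have hangle : ∀ x : ℝ, x = t * k → Real.arccos x < φ / 2 := by
    intro x hx
    have hmem1 : Real.cos (φ / 2) ∈ Set.Icc (-1:ℝ) 1 := ⟨Real.neg_one_le_cos _, Real.cos_le_one _⟩
    have hmem2 : x ∈ Set.Icc (-1:ℝ) 1 := ⟨by rw [hx]; linarith, by rw [hx]; linarith⟩
    have h2 := Real.strictAntiOn_arccos hmem1 hmem2 (by rw [hx]; exact htk)
    rwa [Real.arccos_cos (by linarith) (by linarith)] at h2
  refine ⟨z, hznorm, ?_, ?_, ?_⟩
  · exact hangle _ (by rw [hinner_za, hval])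
  · exact hangle _ (by rw [hinner_zb, hval])
  · intro hzK
    have h1 : (inner ℝ n z : ℝ) = 0 := Submodule.inner_left_of_mem_orthogonal hzK hnK
    rw [hz, inner_add_right, real_inner_smul_right, real_inner_smul_right,
      hinner_n_ab, real_inner_self_eq_norm_sq] at h1
    have h2 : ρ * u / ‖n‖ * ‖n‖ ^ 2 ≠ 0 := by positivity
    simp only [mul_zero, zero_add] at h1
    exact h2 h1
end

section
/- Let S be a countable dense subset of (0, ∞) ∩ R. For any finite affinely independent configuration (0, x_1, ..., x_n) of points with x_1, ..., x_n on the unit sphere of R^n, and any ε > 0, there exists a point z on the unit sphere of R^{n+1} (containing R^n) such that (0, x_1, ..., x_n, z) is affinely independent, all distances |z − x_i| belong to S, and |⟨z, x_i⟩| < ε for all i. -/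
/-- The canonical embedding of `ℝ^n` into `ℝ^(n+1)` (appending a zero coordinate). -/
noncomputable def embedSucc (n : ℕ) (v : EuclideanSpace ℝ (Fin n)) :
    EuclideanSpace ℝ (Fin (n + 1)) :=
  (WithLp.equiv 2 (Fin (n + 1) → ℝ)).symm
    (fun j => if h : (j : ℕ) < n then v ⟨j, h⟩ else 0)

open scoped InnerProductSpace

lemma embedSucc_apply (n : ℕ) (v : EuclideanSpace ℝ (Fin n)) (j : Fin (n+1)) :
    embedSucc n v j = if h : (j : ℕ) < n then v ⟨j, h⟩ else 0 := rfl

lemma embedSucc_castSucc (n : ℕ) (v : EuclideanSpace ℝ (Fin n)) (i : Fin n) :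
    embedSucc n v (Fin.castSucc i) = v i := by
  rw [embedSucc_apply, dif_pos (by simpa using i.is_lt)]
  exact congrArg v (Fin.ext (by simp))

lemma embedSucc_last (n : ℕ) (v : EuclideanSpace ℝ (Fin n)) :
    embedSucc n v (Fin.last n) = 0 := by
  rw [embedSucc_apply, dif_neg (by simp)]

noncomputable def embedLM (n : ℕ) : EuclideanSpace ℝ (Fin n) →ₗ[ℝ] EuclideanSpace ℝ (Fin (n+1)) where
  toFun := embedSucc n
  map_add' u v := by
    ext j
    simp only [embedSucc_apply, PiLp.add_apply]
    split <;> simp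
  map_smul' a u := by
    ext j
    simp only [embedSucc_apply, PiLp.smul_apply, RingHom.id_apply, smul_eq_mul]
    split <;> simp

lemma inner_embedSucc (n : ℕ) (u v : EuclideanSpace ℝ (Fin n)) :
    ⟪embedSucc n u, embedSucc n v⟫_ℝ = ⟪u, v⟫_ℝ := by
  simp only [PiLp.inner_apply, RCLike.inner_apply, conj_trivial]
  rw [Fin.sum_univ_castSucc]
  simp [embedSucc_castSucc, embedSucc_last]

lemma norm_embedSucc (n : ℕ) (v : EuclideanSpace ℝ (Fin n)) :
    ‖embedSucc n v‖ = ‖v‖ := by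
  have h := inner_embedSucc n v v
  rw [real_inner_self_eq_norm_sq, real_inner_self_eq_norm_sq] at h
  have := congrArg Real.sqrt h
  simpa [Real.sqrt_sq, norm_nonneg] using this

theorem stmt12 (S : Set ℝ) (hScount : S.Countable) (hSpos : S ⊆ Set.Ioi (0 : ℝ))
    (hSdense : ∀ a b : ℝ, 0 < a → a < b → ∃ s ∈ S, a < s ∧ s < b)
    (n : ℕ) (x : Fin n → EuclideanSpace ℝ (Fin n))
    (hnorm : ∀ i, ‖x i‖ = 1) (hli : LinearIndependent ℝ x)
    (ε : ℝ) (hε : 0 < ε) :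
    ∃ z : EuclideanSpace ℝ (Fin (n + 1)), ‖z‖ = 1 ∧
      LinearIndependent ℝ (Fin.snoc (fun i => embedSucc n (x i)) z) ∧
      (∀ i, dist z (embedSucc n (x i)) ∈ S) ∧
      ∀ i, |(inner ℝ z (embedSucc n (x i)) : ℝ)| < ε := by
  classical
  -- the "inner products" map and the "linear combination" map
  let T : EuclideanSpace ℝ (Fin n) →ₗ[ℝ] (Fin n → ℝ) := LinearMap.pi fun i => (innerSL ℝ (x i)).toLinearMap
  let Sm : (Fin n → ℝ) →ₗ[ℝ] EuclideanSpace ℝ (Fin n) :=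
    { toFun := fun c => ∑ j, c j • x j
      map_add' := fun a b => by simp [add_smul, Finset.sum_add_distrib]
      map_smul' := fun a b => by simp [smul_smul, Finset.smul_sum] }
  have hTapp : ∀ (v : EuclideanSpace ℝ (Fin n)) i, T v i = ⟪x i, v⟫_ℝ := fun v i => rfl
  have hLinj : Function.Injective (T ∘ₗ Sm) := by
    rw [← LinearMap.ker_eq_bot, LinearMap.ker_eq_bot']
    intro c hc
    have h0 : ∀ i, ⟪x i, ∑ j, c j • x j⟫_ℝ = 0 := by
      intro i
      have := congrFun hc i
      simpa [hTapp, Sm] using this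
    have hsum : ∑ j, c j • x j = 0 := by
      have h1 : ⟪∑ j, c j • x j, ∑ j, c j • x j⟫_ℝ = 0 := by
        rw [sum_inner]
        refine Finset.sum_eq_zero fun i _ => ?_
        rw [real_inner_smul_left, h0 i, mul_zero]
      exact inner_self_eq_zero.mp h1
    funext i
    exact Fintype.linearIndependent_iff.mp hli c hsum i
  have hLsurj : Function.Surjective (T ∘ₗ Sm) :=
    LinearMap.injective_iff_surjective.mp hLinj
  let L : (Fin n → ℝ) ≃ₗ[ℝ] (Fin n → ℝ) :=
    LinearEquiv.ofBijective (T ∘ₗ Sm) ⟨hLinj, hLsurj⟩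
  let W : (Fin n → ℝ) →ₗ[ℝ] EuclideanSpace ℝ (Fin n) := Sm ∘ₗ (L.symm : (Fin n → ℝ) →ₗ[ℝ] (Fin n → ℝ))
  have hW : ∀ (c : Fin n → ℝ) i, ⟪x i, W c⟫_ℝ = c i := by
    intro c i
    have h1 : (T ∘ₗ Sm) (L.symm c) = c := L.apply_symm_apply c
    have h2 : T (Sm (L.symm c)) i = c i := congrFun h1 i
    rw [hTapp] at h2
    exact h2
  -- operator norm bound
  let Wc := LinearMap.toContinuousLinearMap W
  set M : ℝ := ‖Wc‖ with hMdef
  have hM0 : 0 ≤ M := norm_nonneg _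
  have hMle : ∀ c : Fin n → ℝ, ‖W c‖ ≤ M * ‖c‖ := fun c => Wc.le_opNorm c
  set δ : ℝ := min 1 (min ε (1 / (M + 1))) with hδdef
  have hδpos : 0 < δ := by
    refine lt_min one_pos (lt_min hε ?_)
    positivity
  have hδ1 : δ ≤ 1 := min_le_left _ _
  have hδε : δ ≤ ε := le_trans (min_le_right _ _) (min_le_left _ _)
  have hδM : δ ≤ 1 / (M + 1) := le_trans (min_le_right _ _) (min_le_right _ _)
  -- choose s i ∈ S close to √2
  have hlo : (0:ℝ) < Real.sqrt (2 - δ) := Real.sqrt_pos.mpr (by linarith)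
  have hltsqrt : Real.sqrt (2 - δ) < Real.sqrt 2 :=
    Real.sqrt_lt_sqrt (by linarith) (by linarith)
  choose s hsS hs1 hs2 using fun _ : Fin n => hSdense _ _ hlo hltsqrt
  have hspos : ∀ i, 0 < s i := fun i => hSpos (hsS i)
  set c : Fin n → ℝ := fun i => 1 - s i ^ 2 / 2 with hcdef
  have hcpos : ∀ i, 0 < c i := by
    intro i
    have : s i ^ 2 < 2 := (Real.lt_sqrt (hspos i).le).mp (hs2 i)
    simp only [hcdef]; linarith
  have hclt : ∀ i, c i < δ / 2 := by
    intro i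
    have : 2 - δ < s i ^ 2 := (Real.sqrt_lt' (hspos i)).mp (hs1 i)
    simp only [hcdef]; linarith
  have hcnorm : ‖c‖ ≤ δ / 2 := by
    rw [pi_norm_le_iff_of_nonneg (by linarith)]
    intro i
    rw [Real.norm_eq_abs, abs_of_pos (hcpos i)]
    exact (hclt i).le
  have hWlt : ‖W c‖ < 1 := by
    have h1 : ‖W c‖ ≤ M * (δ / 2) :=
      le_trans (hMle c) (mul_le_mul_of_nonneg_left hcnorm hM0)
    have h2 : δ * (M + 1) ≤ 1 := by
      rw [le_div_iff₀ (by linarith)] at hδM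
      linarith
    nlinarith
  set w : EuclideanSpace ℝ (Fin (n+1)) := embedSucc n (W c) with hwdef
  have hWnn : (0:ℝ) ≤ ‖W c‖ := norm_nonneg _
  set t : ℝ := Real.sqrt (1 - ‖W c‖ ^ 2) with htdef
  have htpos : 0 < t := Real.sqrt_pos.mpr (by nlinarith)
  have ht2 : t ^ 2 = 1 - ‖W c‖ ^ 2 := Real.sq_sqrt (by nlinarith)
  set e : EuclideanSpace ℝ (Fin (n+1)) := EuclideanSpace.single (Fin.last n) (1:ℝ) with hedef
  have he_inner : ∀ v : EuclideanSpace ℝ (Fin n), ⟪e, embedSucc n v⟫_ℝ = 0 := by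
    intro v
    rw [hedef, EuclideanSpace.inner_single_left]
    simp [embedSucc_last]
  have hee : ⟪e, e⟫_ℝ = 1 := by
    rw [hedef, EuclideanSpace.inner_single_left]
    simp [EuclideanSpace.single_apply]
  have hnormw : ‖w‖ = ‖W c‖ := norm_embedSucc n (W c)
  have hne : ‖e‖ = 1 := by rw [hedef]; simp [EuclideanSpace.norm_single]
  have hwe : ⟪w, t • e⟫_ℝ = 0 := by
    rw [real_inner_smul_right, real_inner_comm, he_inner, mul_zero]
  have hznorm : ‖w + t • e‖ = 1 := by
    have hsq : ‖w + t • e‖ ^ 2 = 1 := by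
      rw [norm_add_sq_real, hwe, hnormw, norm_smul, Real.norm_eq_abs, abs_of_pos htpos,
        hne, mul_one]
      linarith [ht2]
    have h0 := norm_nonneg (w + t • e)
    have h1 := Real.sqrt_sq h0
    rw [← h1, hsq, Real.sqrt_one]
  have hinner : ∀ i, ⟪w + t • e, embedSucc n (x i)⟫_ℝ = c i := by
    intro i
    rw [inner_add_left, real_inner_smul_left, he_inner (x i), mul_zero,
      add_zero, hwdef, inner_embedSucc, real_inner_comm, hW]
  refine ⟨w + t • e, hznorm, ?_, ?_, ?_⟩
  · -- linear independence
    rw [linearIndependent_fin_snoc]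
    constructor
    · have hinj : Function.Injective (embedLM n) := by
        intro u v h
        ext i
        have h2 := congrArg (fun f : EuclideanSpace ℝ (Fin (n+1)) => f (Fin.castSucc i)) h
        simpa [embedLM, embedSucc_castSucc] using h2
      exact hli.map' (embedLM n) (LinearMap.ker_eq_bot.mpr hinj)
    · intro hmem
      have hle : Submodule.span ℝ (Set.range fun i => embedSucc n (x i)) ≤
          LinearMap.ker ((innerSL ℝ e).toLinearMap) := by
        rw [Submodule.span_le]
        rintro _ ⟨i, rfl⟩
        simp only [SetLike.mem_coe, LinearMap.mem_ker, ContinuousLinearMap.coe_coe,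
          innerSL_apply_apply]
        exact he_inner (x i)
      have h0 : ⟪e, w + t • e⟫_ℝ = 0 := hle hmem
      rw [inner_add_right, he_inner (W c), real_inner_smul_right, hee, mul_one, zero_add] at h0
      exact absurd h0 (ne_of_gt htpos)
  · -- distances in S
    intro i
    have hnx : ‖embedSucc n (x i)‖ = 1 := by rw [norm_embedSucc, hnorm]
    have hd2 : dist (w + t • e) (embedSucc n (x i)) ^ 2 = s i ^ 2 := by
      rw [dist_eq_norm, norm_sub_sq_real, hznorm, hinner i, hnx]
      simp only [hcdef]; ring
    have hdist : dist (w + t • e) (embedSucc n (x i)) = s i := by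
      have h0 : (0:ℝ) ≤ dist (w + t • e) (embedSucc n (x i)) := dist_nonneg
      have h1 := congrArg Real.sqrt hd2
      rwa [Real.sqrt_sq h0, Real.sqrt_sq (hspos i).le] at h1
    rw [hdist]
    exact hsS i
  · -- small inner products
    intro i
    rw [hinner i, abs_of_pos (hcpos i)]
    have h1 := hclt i
    have h2 := hδε
    have h3 := hδpos
    calc c i < δ / 2 := h1
      _ ≤ ε / 2 := by gcongr
      _ < ε := half_lt_self hε
end
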